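/- Let X be a topological space and let τ be a topology on C(X,$) whose open sets are all openly isotone. Let ℱ be a filter on C(X,ℝ). Then ℱ converges to the zero function 0̄ in the topology τ^⇑ if and only if for every n ≥ 1 the image filter ℱ⁻(Wₙ) converges to X (the whole space, as an element of C(X,$)) in τ, where Wₙ = (−1/n, 1/n). -/

import Mathlib

open TopologicalSpace Topology

/-- A family of open sets is *openly isotone* if it is upward closed among open sets. -/
def OpenlyIsotone {X : Type*} [TopologicalSpace X] (A : Set (Opens X)) : Prop :=
  ∀ ⦃U V : Opens X⦄, U ∈ A → U ≤ V → V ∈ A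

/-- The preimage of an open set under a continuous map, as an open set. -/
def preim {X Z : Type*} [TopologicalSpace X] [TopologicalSpace Z]
    (f : C(X, Z)) (U : Opens Z) : Opens X :=
  ⟨f ⁻¹' U, U.isOpen.preimage f.continuous⟩

/-- The basic open neighborhood `Wₙ = (-1/n, 1/n)` of `0` in `ℝ`. -/
def Wball (n : ℕ) : Opens ℝ :=
  ⟨Set.Ioo (-(1 / (n : ℝ))) (1 / (n : ℝ)), isOpen_Ioo⟩

/-- The topology `τ^⇑` on `C(X,ℝ)`: the initial topology induced by the maps
`f ↦ f⁻¹(U)` into `(C(X,$), τ)`, `U` ranging over open subsets of `ℝ`. -/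
def upTop {X : Type*} [TopologicalSpace X] (τ : TopologicalSpace (Opens X)) :
    TopologicalSpace C(X, ℝ) :=
  ⨅ U : Opens ℝ, TopologicalSpace.induced (fun f : C(X, ℝ) => preim f U) τ

/-- A filter `ℱ` on `C(X,ℝ)` converges to the zero function in `τ^⇑` iff for every `n ≥ 1`
the image filter `ℱ⁻(Wₙ)` converges to the whole space `X` in `τ`. -/
theorem tendsto_zero_iff {X : Type*} [TopologicalSpace X]
    (τ : TopologicalSpace (Opens X))
    (hiso : ∀ S : Set (Opens X), IsOpen[τ] S → OpenlyIsotone S)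
    (F : Filter C(X, ℝ)) :
    F ≤ @nhds _ (upTop τ) (0 : C(X, ℝ)) ↔
      ∀ n : ℕ, 1 ≤ n →
        Filter.map (fun f : C(X, ℝ) => preim f (Wball n)) F ≤ @nhds _ τ (⊤ : Opens X) := by
  letI : TopologicalSpace (Opens X) := τ
  have key : F ≤ @nhds _ (upTop τ) (0 : C(X, ℝ)) ↔
      ∀ U : Opens ℝ, Filter.map (fun f : C(X, ℝ) => preim f U) F ≤
        𝓝 (preim (0 : C(X, ℝ)) U) := by
    unfold upTop
    simp only [nhds_iInf, le_iInf_iff, nhds_induced, ← Filter.map_le_iff_le_comap]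
  have hmem : ∀ U : Opens ℝ, (0 : ℝ) ∈ U → preim (0 : C(X, ℝ)) U = ⊤ := by
    intro U hU
    ext x
    simp [preim, hU]
  have hWmem : ∀ n : ℕ, 1 ≤ n → (0 : ℝ) ∈ Wball n := by
    intro n hn
    have hpos : (0 : ℝ) < 1 / n := by positivity
    exact ⟨by linarith, hpos⟩
  rw [key]
  constructor
  · intro h n hn
    have := h (Wball n)
    rwa [hmem _ (hWmem n hn)] at this
  · intro h U
    by_cases h0 : (0 : ℝ) ∈ U
    · rw [hmem U h0]
      -- find n with Wball n ⊆ U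
      obtain ⟨ε, hε, hball⟩ := Metric.isOpen_iff.1 U.isOpen 0 h0
      obtain ⟨n, hn⟩ := exists_nat_one_div_lt hε
      have hsub : (Wball (n+1) : Set ℝ) ⊆ (U : Set ℝ) := by
        intro x hx
        apply hball
        rw [Metric.mem_ball, Real.dist_eq, sub_zero, abs_lt]
        obtain ⟨h1, h2⟩ := hx
        push_cast at h1 h2 ⊢
        constructor <;> linarith
      intro S hS
      obtain ⟨T, hTS, hTopen, hT⟩ := mem_nhds_iff.1 hS
      have hTn : T ∈ 𝓝 (⊤ : Opens X) := hTopen.mem_nhds hT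
      have := h (n+1) (Nat.le_add_left 1 n) hTn
      rw [Filter.mem_map] at this ⊢
      refine F.sets_of_superset this ?_
      intro f hf
      apply hTS
      exact hiso T hTopen hf (fun x hx => hsub hx)
    · -- preim 0 U = ⊥
      have hbot : preim (0 : C(X, ℝ)) U = ⊥ := by
        ext x
        simp [preim, h0]
      rw [hbot]
      intro S hS
      obtain ⟨T, hTS, hTopen, hT⟩ := mem_nhds_iff.1 hS
      rw [Filter.mem_map]
      refine F.sets_of_superset Filter.univ_mem ?_
      intro f _
      exact hTS (hiso T hTopen hT bot_le)
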